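/- Assume p^n·v_K(f) ≥ b·p^{r+1}, and set 𝔗 = p^n·v_K(f) - b·(p^{r+1} - 1) (so 𝔗 ≥ b > 0). Then for every s with 0 ≤ s ≤ n-1 and every i with 1 ≤ i ≤ p^n - 1, writing i = Σ_{s=0}^{n-1} i_s p^s in base p, one has z_{p^s}(x^i) - i_s·x^{i - p^s} ∈ x^{i - p^s}·𝔓_L^𝔗, i.e. z_{p^s}(x^i) ≡ i_s·x^{i-p^s} modulo x^{i-p^s}·𝔓_L^𝔗 (powers of x computed in L, in which x is invertible). -/

import Mathlib

open Polynomial TensorProduct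

noncomputable section

/-- The truncated polynomial algebra `K[t]/(t^{p^n})`, underlying the Hopf algebra
`H_{n,r,f}`. -/
abbrev TruncAlg (K : Type) [Field K] (p n : ℕ) : Type :=
  AdjoinRoot (X ^ p ^ n : K[X])

/-- `t`, the image of `X` in `K[t]/(t^{p^n})`. -/
def tgen (K : Type) [Field K] (p n : ℕ) : TruncAlg K p n :=
  AdjoinRoot.root _

/-- The basis `1, t, t^2, …, t^{p^n-1}` of `K[t]/(t^{p^n})`. -/
def tbasis (K : Type) [Field K] (p n : ℕ) :
    Module.Basis (Fin (p ^ n)) K (TruncAlg K p n) :=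
  (AdjoinRoot.powerBasis (f := (X ^ p ^ n : K[X]))
    (pow_ne_zero _ Polynomial.X_ne_zero)).basis.reindex
    (finCongr (by simp))

/-- The dual basis functional `z_j ∈ H = H_{n,r,f}^*`, with `z_j (t^i) = δ_{ij}`;
junk value `0` out of range. -/
def zdual (K : Type) [Field K] (p n : ℕ) (j : ℕ) :
    Module.Dual K (TruncAlg K p n) :=
  if h : j < p ^ n then (tbasis K p n).coord ⟨j, h⟩ else 0

/-- The coefficient `1/(ℓ!(p-ℓ)!)`, computed in the prime field of `K`. -/
def pfCoeff (K : Type) [Field K] (p ℓ : ℕ) : K :=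
  ((ℓ.factorial * (p - ℓ).factorial : ℕ) : K)⁻¹

/-- The element `Δ(t) = t⊗1 + 1⊗t + f Σ_{ℓ=1}^{p-1} (1/(ℓ!(p-ℓ)!)) t^{p^r ℓ} ⊗ t^{p^r (p-ℓ)}`. -/
def Delta_t (K : Type) [Field K] (p n r : ℕ) (f : K) :
    TruncAlg K p n ⊗[K] TruncAlg K p n :=
  tgen K p n ⊗ₜ 1 + 1 ⊗ₜ tgen K p n +
    f • ∑ ℓ ∈ Finset.Icc 1 (p - 1),
      pfCoeff K p ℓ • ((tgen K p n ^ (p ^ r * ℓ)) ⊗ₜ[K] (tgen K p n ^ (p ^ r * (p - ℓ))))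

/-- The comultiplication of `H_{n,r,f}` as a linear map, determined by `Δ(t^i) = Δ(t)^i`
(it is the unique `K`-algebra map with `t ↦ Δ(t)`). -/
def DeltaMap (K : Type) [Field K] (p n r : ℕ) (f : K) :
    TruncAlg K p n →ₗ[K] TruncAlg K p n ⊗[K] TruncAlg K p n :=
  (tbasis K p n).constr K fun i => (Delta_t K p n r f) ^ (i : ℕ)

/-- Convolution product on `H = (H_{n,r,f})^*`:  `(z * z')(h) = mult ((z ⊗ z')(Δ h))`. -/
def conv (K : Type) [Field K] (p n r : ℕ) (f : K)
    (z z' : Module.Dual K (TruncAlg K p n)) : Module.Dual K (TruncAlg K p n) :=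
  (LinearMap.mul' K K) ∘ₗ (TensorProduct.map z z') ∘ₗ DeltaMap K p n r f

/-- Convolution powers; the 0th power is the unit `z_0 = ε` of `H`. -/
def convPow (K : Type) [Field K] (p n r : ℕ) (f : K)
    (z : Module.Dual K (TruncAlg K p n)) : ℕ → Module.Dual K (TruncAlg K p n)
  | 0 => zdual K p n 0
  | m + 1 => conv K p n r f (convPow K p n r f z m) z

/-- The convolution product `z_1^{j 0} · z_p^{j 1} ⋯ z_{p^{m-1}}^{j (m-1)}` in `H`. -/
def zprod (K : Type) [Field K] (p n r : ℕ) (f : K)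
    (j : ℕ → ℕ) : ℕ → Module.Dual K (TruncAlg K p n)
  | 0 => zdual K p n 0
  | m + 1 => conv K p n r f (zprod K p n r f j m)
      (convPow K p n r f (zdual K p n (p ^ m)) (j m))

/-- The element `α(x) = x⊗1 + 1⊗t + f Σ_{ℓ=1}^{p-1} (1/(ℓ!(p-ℓ)!)) x^{p^r ℓ} ⊗ t^{p^r(p-ℓ)}`
of `L ⊗ H_{n,r,f}`. -/
def alphaEl (K : Type) [Field K] (p n r : ℕ) (f : K)
    (L : Type) [Field L] [Algebra K L] (x : L) : L ⊗[K] TruncAlg K p n :=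
  x ⊗ₜ 1 + 1 ⊗ₜ tgen K p n +
    f • ∑ ℓ ∈ Finset.Icc 1 (p - 1),
      pfCoeff K p ℓ • ((x ^ (p ^ r * ℓ)) ⊗ₜ[K] (tgen K p n ^ (p ^ r * (p - ℓ))))

/-- The coaction `α : L → L ⊗ H_{n,r,f}` as a linear map, determined by `α(x^i) = α(x)^i`
(it is the unique `K`-algebra map with `x ↦ α(x)`). -/
def alphaMap (K : Type) [Field K] (p n r : ℕ) (f : K)
    (L : Type) [Field L] [Algebra K L] (x : L) (bL : Module.Basis (Fin (p ^ n)) K L) :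
    L →ₗ[K] L ⊗[K] TruncAlg K p n :=
  bL.constr K fun i => (alphaEl K p n r f L x) ^ (i : ℕ)

/-- The action of `h ∈ H = H_{n,r,f}^*` on `L`:  `h(y) = (mult ∘ (1 ⊗ h))(α(y))`. -/
def hact (K : Type) [Field K] (p n r : ℕ) (f : K)
    (L : Type) [Field L] [Algebra K L] (x : L) (bL : Module.Basis (Fin (p ^ n)) K L)
    (h : Module.Dual K (TruncAlg K p n)) : L →ₗ[K] L :=
  (TensorProduct.rid K L).toLinearMap ∘ₗ (TensorProduct.map LinearMap.id h) ∘ₗ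
    alphaMap K p n r f L x bL

/-- The fractional ideal `𝔓_L^h = {y ∈ L : v_L(y) ≥ h}`. -/
def fracIdeal (L : Type) [Zero L] (vL : L → ℤ) (h : ℤ) : Set L :=
  {y | y ≠ 0 → h ≤ vL y}

/-- The `s`-th base-`p` digit of a natural number. -/
def digit (p i s : ℕ) : ℕ := i / p ^ s % p

/-- `res(m)`: the least nonnegative residue of `m` modulo `N`. -/
def resZ (N : ℕ) (m : ℤ) : ℤ := m % (N : ℤ)

/-- The `s`-th base-`p` digit of an integer (intended: of a least nonnegative residue). -/
def digitZ (p : ℕ) (m : ℤ) (s : ℕ) : ℤ := m / (p : ℤ) ^ s % (p : ℤ)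

/-- The uniformizer `T` of `K = F_q((T))`. -/
def Tvar (F : Type) [Field F] : LaurentSeries F := HahnSeries.single (1 : ℤ) (1 : F)

/-- The scaffold element `λ_j = T^{(j + b·res(aj))/p^n} x^{res(aj)}`. -/
def lam (F : Type) [Field F] (p n : ℕ) (a b : ℤ)
    (L : Type) [Field L] [Algebra (LaurentSeries F) L] (x : L) (j : ℤ) : L :=
  algebraMap (LaurentSeries F) L
      (Tvar F ^ ((j + b * resZ (p ^ n) (a * j)) / ((p : ℤ) ^ n))) *
    x ^ (resZ (p ^ n) (a * j)).toNat


/-! ### Auxiliary lemmas -/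

section AuxLemmas

variable {K : Type} [Field K] {p n : ℕ}

lemma tgen_pow_pn (K : Type) [Field K] (p n : ℕ) : tgen K p n ^ p ^ n = 0 := by
  rw [tgen, AdjoinRoot.root, ← map_pow, AdjoinRoot.mk_self]

lemma tgen_pow_of_le (m : ℕ) (hm : p ^ n ≤ m) : tgen K p n ^ m = 0 := by
  rw [← Nat.sub_add_cancel hm, pow_add, tgen_pow_pn, mul_zero]

lemma tbasis_apply (k : Fin (p ^ n)) : tbasis K p n k = tgen K p n ^ (k : ℕ) := by
  rw [tbasis, Module.Basis.reindex_apply, PowerBasis.basis_eq_pow, AdjoinRoot.powerBasis_gen]; rfl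

lemma zdual_tgen_pow (j m : ℕ) (hj : j < p ^ n) :
    zdual K p n j (tgen K p n ^ m) = if j = m then 1 else 0 := by
  rw [zdual, dif_pos hj]
  by_cases hm : m < p ^ n
  · have : tgen K p n ^ m = tbasis K p n ⟨m, hm⟩ := (tbasis_apply ⟨m, hm⟩).symm
    rw [this, Module.Basis.coord_apply, Module.Basis.repr_self]
    by_cases h : j = m
    · subst h; simp
    · rw [Finsupp.single_apply, if_neg (by simpa [Fin.ext_iff] using Ne.symm h), if_neg h]
  · rw [tgen_pow_of_le m (le_of_not_gt hm), map_zero, if_neg (by omega)]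

lemma zdual_shift (j e : ℕ) (hj : j < p ^ n) (h : TruncAlg K p n) :
    zdual K p n j (tgen K p n ^ e * h)
      = if e ≤ j then zdual K p n (j - e) h else 0 := by
  have key : (zdual K p n j).comp (LinearMap.mulLeft K (tgen K p n ^ e))
      = if e ≤ j then zdual K p n (j - e) else 0 := by
    apply (tbasis K p n).ext
    intro k
    rw [tbasis_apply]
    simp only [LinearMap.comp_apply, LinearMap.mulLeft_apply, ← pow_add]
    rw [zdual_tgen_pow _ _ hj]
    by_cases he : e ≤ j
    · rw [if_pos he, zdual_tgen_pow _ _ (by omega)]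
      by_cases h1 : j = e + (k : ℕ)
      · rw [if_pos h1, if_pos (by omega)]
      · rw [if_neg h1, if_neg (by omega)]
    · rw [if_neg he, if_neg (by omega), LinearMap.zero_apply]
  have := congrArg (fun g => g h) key
  simpa using this.trans (by by_cases he : e ≤ j <;> simp [he])

/-- The `t^j`-coefficient functional on `L ⊗[K] K[t]/(t^{p^n})`. -/
def coeffL (K : Type) [Field K] (p n : ℕ) (L : Type) [Field L] [Algebra K L] (j : ℕ) :
    L ⊗[K] TruncAlg K p n →ₗ[K] L :=
  (TensorProduct.rid K L).toLinearMap ∘ₗ (TensorProduct.map LinearMap.id (zdual K p n j))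

variable {L : Type} [Field L] [Algebra K L]

lemma coeffL_tmul (j : ℕ) (y : L) (h : TruncAlg K p n) :
    coeffL K p n L j (y ⊗ₜ h) = zdual K p n j h • y := by
  simp [coeffL]

lemma coeffL_mul_tmul (j a e : ℕ) (hj : j < p ^ n) (x : L) (z : L ⊗[K] TruncAlg K p n) :
    coeffL K p n L j (((x ^ a) ⊗ₜ[K] (tgen K p n ^ e)) * z)
      = if e ≤ j then x ^ a * coeffL K p n L (j - e) z else 0 := by
  induction z using TensorProduct.induction_on with
  | zero => simp
  | tmul y h =>
      rw [Algebra.TensorProduct.tmul_mul_tmul, coeffL_tmul, coeffL_tmul, zdual_shift _ _ hj]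
      by_cases he : e ≤ j
      · rw [if_pos he, if_pos he, mul_smul_comm]
      · simp [he]
  | add z1 z2 ih1 ih2 =>
      rw [mul_add, map_add, ih1, ih2, map_add]
      by_cases he : e ≤ j <;> simp [he, mul_add]

/-- The "valuation bound" predicate used in the congruence argument: every
`t^j`-coefficient of `z` has valuation at least `-b·d + b·j + c`. -/
def GoodCf (K : Type) [Field K] (p n : ℕ) (L : Type) [Field L] [Algebra K L]
    (vL : L → ℤ) (b d c : ℤ) (z : L ⊗[K] TruncAlg K p n) : Prop :=
  ∀ j : ℕ, j < p ^ n → coeffL K p n L j z ≠ 0 →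
    -b * d + b * j + c ≤ vL (coeffL K p n L j z)

variable (vL : L → ℤ) {b : ℤ}

lemma good_zero (b d c : ℤ) : GoodCf K p n L vL b d c 0 := by
  intro j hj h0
  simp [map_zero] at h0

lemma good_mono {d c d' c' : ℤ} (h : -b * d' + c' ≤ -b * d + c) {z : L ⊗[K] TruncAlg K p n}
    (H : GoodCf K p n L vL b d c z) : GoodCf K p n L vL b d' c' z := by
  intro j hj h0
  have := H j hj h0
  linarith

lemma good_add (hvadd : ∀ y z : L, y ≠ 0 → z ≠ 0 → y + z ≠ 0 → min (vL y) (vL z) ≤ vL (y + z))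
    {d c : ℤ} {z1 z2 : L ⊗[K] TruncAlg K p n}
    (h1 : GoodCf K p n L vL b d c z1) (h2 : GoodCf K p n L vL b d c z2) :
    GoodCf K p n L vL b d c (z1 + z2) := by
  intro j hj h0
  rw [map_add] at h0 ⊢
  by_cases e1 : coeffL K p n L j z1 = 0
  · rw [e1, zero_add] at h0 ⊢; exact h2 j hj h0
  by_cases e2 : coeffL K p n L j z2 = 0
  · rw [e2, add_zero] at h0 ⊢; exact h1 j hj e1
  · exact le_trans (le_min (h1 j hj e1) (h2 j hj e2)) (hvadd _ _ e1 e2 h0)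

lemma good_sum (hvadd : ∀ y z : L, y ≠ 0 → z ≠ 0 → y + z ≠ 0 → min (vL y) (vL z) ≤ vL (y + z))
    {d c : ℤ} {ι : Type} (s : Finset ι) (g : ι → L ⊗[K] TruncAlg K p n)
    (h : ∀ i ∈ s, GoodCf K p n L vL b d c (g i)) :
    GoodCf K p n L vL b d c (∑ i ∈ s, g i) := by
  classical
  induction s using Finset.induction_on with
  | empty => simpa using good_zero vL b d c
  | insert _ _ hni ih =>
      rw [Finset.sum_insert hni]
      exact good_add vL hvadd (h _ (Finset.mem_insert_self _ _))
        (ih fun i hi => h i (Finset.mem_insert_of_mem hi))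

lemma good_mul_pow (hvmul : ∀ y z : L, y ≠ 0 → z ≠ 0 → vL (y * z) = vL y + vL z)
    {x : L} (hx0 : x ≠ 0) (hvx : ∀ a : ℕ, vL (x ^ a) = -b * a)
    (a e : ℕ) {d c : ℤ} {z : L ⊗[K] TruncAlg K p n}
    (h : GoodCf K p n L vL b d c z) :
    GoodCf K p n L vL b (d + a + e) c (((x ^ a) ⊗ₜ[K] (tgen K p n ^ e)) * z) := by
  intro j hj h0
  rw [coeffL_mul_tmul j a e hj] at h0 ⊢
  by_cases he : e ≤ j
  · rw [if_pos he] at h0 ⊢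
    have hc : coeffL K p n L (j - e) z ≠ 0 := fun hc => h0 (by rw [hc, mul_zero])
    rw [hvmul _ _ (pow_ne_zero _ hx0) hc, hvx]
    have hg := h (j - e) (by omega) hc
    have hje : ((j - e : ℕ) : ℤ) = (j : ℤ) - e := by
      rw [Nat.cast_sub he]
    rw [hje] at hg
    linarith
  · rw [if_neg he] at h0; exact absurd rfl h0

lemma good_smul (hvmul : ∀ y z : L, y ≠ 0 → z ≠ 0 → vL (y * z) = vL y + vL z)
    (k : K) (hk : k ≠ 0) {d c : ℤ} {z : L ⊗[K] TruncAlg K p n}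
    (h : GoodCf K p n L vL b d c z) :
    GoodCf K p n L vL b d (c + vL (algebraMap K L k)) (k • z) := by
  intro j hj h0
  rw [map_smul] at h0 ⊢
  by_cases hz : coeffL K p n L j z = 0
  · rw [hz, smul_zero] at h0; exact absurd rfl h0
  have hkL : algebraMap K L k ≠ 0 := fun h0' =>
    hk ((algebraMap K L).injective (by rw [h0', map_zero]))
  rw [Algebra.smul_def, hvmul _ _ hkL hz]
  have := h j hj hz
  linarith

end AuxLemmas

open Nat in
lemma lucas_digit (p : ℕ) [Fact p.Prime] (s : ℕ) :
    ∀ i : ℕ, Nat.choose i (p ^ s) ≡ i / p ^ s % p [MOD p] := by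
  have hp0 : 0 < p := (Fact.out : p.Prime).pos
  induction s with
  | zero => intro i; simpa using (Nat.mod_modEq i p).symm
  | succ s ih =>
    intro i
    have h := Choose.choose_modEq_choose_mod_mul_choose_div_nat (p := p) (n := i) (k := p ^ (s+1))
    have h2 : p ^ (s+1) % p = 0 := by rw [pow_succ, Nat.mul_mod_left]
    have h3 : p ^ (s+1) / p = p ^ s := by rw [pow_succ, Nat.mul_div_cancel _ hp0]
    rw [h2, h3, Nat.choose_zero_right, one_mul] at h
    refine h.trans ((ih (i / p)).trans ?_)
    rw [Nat.div_div_eq_div_mul, ← pow_succ']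

lemma laurent_algebraMap_eq_C (F : Type) [Field F] (c : F) :
    algebraMap F (LaurentSeries F) c = HahnSeries.C c := by
  rw [HahnSeries.algebraMap_apply' (Γ := ℤ), ← PowerSeries.C_eq_algebraMap,
    HahnSeries.ofPowerSeries_C]

lemma laurent_natCast_inv_order (F : Type) [Field F] (p : ℕ) [CharP F p] [Fact p.Prime]
    (m : ℕ) (hm : ¬ p ∣ m) :
    ((m : LaurentSeries F))⁻¹ ≠ 0 ∧ ((m : LaurentSeries F))⁻¹.order = 0 := by
  haveI : CharP (LaurentSeries F) p :=
    charP_of_injective_algebraMap (algebraMap F (LaurentSeries F)).injective p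
  have hF : (m : F) ≠ 0 := by
    rw [Ne, CharP.cast_eq_zero_iff F p]; exact hm
  have hK : (m : LaurentSeries F) ≠ 0 := by
    rw [Ne, CharP.cast_eq_zero_iff (LaurentSeries F) p]; exact hm
  have key : ((m : LaurentSeries F))⁻¹ = algebraMap F (LaurentSeries F) (m : F)⁻¹ := by
    rw [inv_eq_of_mul_eq_one_left]
    rw [← map_natCast (algebraMap F (LaurentSeries F)) m, ← map_mul, inv_mul_cancel₀ hF, map_one]
  refine ⟨inv_ne_zero hK, ?_⟩
  rw [key, laurent_algebraMap_eq_C, HahnSeries.order_C]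

set_option maxHeartbeats 2000000

/-- If `p^n·v_K(f) ≥ b·p^{r+1}` and `𝔗 = p^n·v_K(f) - b(p^{r+1}-1)`, then
for `0 ≤ s ≤ n-1` and `1 ≤ i ≤ p^n-1`,
`z_{p^s}(x^i) ≡ i_s·x^{i-p^s}` modulo `x^{i-p^s}·𝔓_L^𝔗`. -/
theorem zdual_act_congruence
    (p : ℕ) [Fact p.Prime] (F : Type) [Field F] [Fintype F] [CharP F p]
    (n r : ℕ) (hr : 0 < r) (hrn : r < n) (hn2r : n ≤ 2 * r)
    (f : LaurentSeries F) (hf : f ≠ 0)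
    (L : Type) [Field L] [Algebra (LaurentSeries F) L]
    (β : LaurentSeries F) (b : ℤ) (hb : 0 < b) (hpb : ¬ (p : ℤ) ∣ b)
    (hβ : β ≠ 0) (hordβ : β.order = -b)
    (x : L) (hx : x ^ p ^ n = algebraMap (LaurentSeries F) L β)
    (bL : Module.Basis (Fin (p ^ n)) (LaurentSeries F) L)
    (hbL : ∀ i : Fin (p ^ n), bL i = x ^ (i : ℕ))
    (vL : L → ℤ)
    (hvmul : ∀ y z : L, y ≠ 0 → z ≠ 0 → vL (y * z) = vL y + vL z)
    (hvadd : ∀ y z : L, y ≠ 0 → z ≠ 0 → y + z ≠ 0 → min (vL y) (vL z) ≤ vL (y + z))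
    (hvK : ∀ c : LaurentSeries F, c ≠ 0 →
      vL (algebraMap (LaurentSeries F) L c) = (p : ℤ) ^ n * c.order)
    (hvf : (b : ℤ) * (p : ℤ) ^ (r + 1) ≤ (p : ℤ) ^ n * f.order) :
    ∀ s : ℕ, s < n → ∀ i : ℕ, 1 ≤ i → i ≤ p ^ n - 1 →
      ∃ w ∈ fracIdeal L vL ((p : ℤ) ^ n * f.order - b * ((p : ℤ) ^ (r + 1) - 1)),
        hact (LaurentSeries F) p n r f L x bL (zdual (LaurentSeries F) p n (p ^ s)) (x ^ i)
            - (digit p i s : LaurentSeries F) • (x ^ ((i : ℤ) - (p : ℤ) ^ s))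
          = x ^ ((i : ℤ) - (p : ℤ) ^ s) * w := by

  intro s hs i hi1 hi2
  haveI : CharP (LaurentSeries F) p :=
    charP_of_injective_algebraMap (algebraMap F (LaurentSeries F)).injective p
  have hp : p.Prime := Fact.out
  have hp1 : 1 < p := hp.one_lt
  have hpn0 : 0 < p ^ n := pow_pos hp.pos n
  have hilt : i < p ^ n := by omega
  have hj : p ^ s < p ^ n := Nat.pow_lt_pow_right hp1 hs
  have hsmul1 : ∀ y : L, (1 : LaurentSeries F) • y = y := fun y => one_smul (LaurentSeries F) y
  have hsmul0 : ∀ y : L, (0 : LaurentSeries F) • y = 0 := fun y => zero_smul (LaurentSeries F) y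
  have hx0 : x ≠ 0 := by
    intro h
    apply hβ
    apply (algebraMap (LaurentSeries F) L).injective
    rw [map_zero, ← hx, h, zero_pow (by positivity : p ^ n ≠ 0)]
  -- basic valuation facts
  have hv1 : vL 1 = 0 := by
    have := hvmul 1 1 one_ne_zero one_ne_zero
    rw [mul_one] at this; linarith
  have hvpow : ∀ (y : L), y ≠ 0 → ∀ a : ℕ, vL (y ^ a) = a * vL y := by
    intro y hy a
    induction a with
    | zero => simpa using hv1
    | succ a ih =>
        rw [pow_succ, hvmul _ _ (pow_ne_zero _ hy) hy, ih]
        push_cast; ring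
  have hvx : vL x = -b := by
    have h1 := hvpow x hx0 (p ^ n)
    rw [hx, hvK β hβ, hordβ] at h1
    have hpn : ((p ^ n : ℕ) : ℤ) = (p : ℤ) ^ n := by push_cast; ring
    rw [hpn] at h1
    have hne : ((p : ℤ) ^ n) ≠ 0 := by positivity
    exact mul_left_cancel₀ hne h1.symm
  have hvxpow : ∀ a : ℕ, vL (x ^ a) = -b * a := fun a => by
    rw [hvpow x hx0 a, hvx]; ring
  have hvinv : ∀ y : L, y ≠ 0 → vL y⁻¹ = -vL y := by
    intro y hy
    have := hvmul y y⁻¹ hy (inv_ne_zero hy)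
    rw [mul_inv_cancel₀ hy, hv1] at this; linarith
  have hvzpow : ∀ m : ℤ, vL (x ^ m) = -b * m := by
    intro m
    rcases le_or_gt 0 m with hm | hm
    · obtain ⟨a, rfl⟩ := Int.eq_ofNat_of_zero_le hm
      rw [zpow_natCast, hvxpow]
    · have h1 : x ^ m = (x ^ (-m))⁻¹ := by rw [← zpow_neg, neg_neg]
      obtain ⟨a, ha⟩ := Int.eq_ofNat_of_zero_le (by omega : (0:ℤ) ≤ -m)
      rw [h1, hvinv _ (zpow_ne_zero _ hx0), ha, zpow_natCast, hvxpow,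
        show m = -(a : ℤ) from by omega]
      ring
  set T : ℤ := (p : ℤ) ^ n * f.order - b * ((p : ℤ) ^ (r + 1) - 1) with hT
  have hTb : b ≤ T := by
    have : b * ((p : ℤ) ^ (r+1) - 1) = b * (p : ℤ) ^ (r+1) - b := by ring
    rw [hT, this]
    linarith
  -- pfCoeff facts
  have hpf : ∀ ℓ ∈ Finset.Icc 1 (p - 1),
      pfCoeff (LaurentSeries F) p ℓ ≠ 0 ∧ vL (algebraMap (LaurentSeries F) L (pfCoeff (LaurentSeries F) p ℓ)) = 0 := by
    intro ℓ hℓ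
    rw [Finset.mem_Icc] at hℓ
    have hm : ¬ p ∣ (Nat.factorial ℓ * Nat.factorial (p - ℓ)) := by
      intro hdvd
      rcases (Nat.Prime.dvd_mul hp).mp hdvd with h | h
      · exact absurd ((Nat.Prime.dvd_factorial hp).mp h) (by omega)
      · exact absurd ((Nat.Prime.dvd_factorial hp).mp h) (by omega)
    obtain ⟨hne, hord⟩ := laurent_natCast_inv_order F p _ hm
    refine ⟨hne, ?_⟩
    rw [show pfCoeff (LaurentSeries F) p ℓ = ((Nat.factorial ℓ * Nat.factorial (p - ℓ) : ℕ) : (LaurentSeries F))⁻¹ from rfl]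
    rw [hvK _ hne, hord, mul_zero]
  -- the three pieces of alphaEl
  set A : L ⊗[(LaurentSeries F)] TruncAlg (LaurentSeries F) p n := alphaEl (LaurentSeries F) p n r f L x with hA
  set P : L ⊗[(LaurentSeries F)] TruncAlg (LaurentSeries F) p n := x ⊗ₜ 1 + 1 ⊗ₜ tgen (LaurentSeries F) p n with hP
  set C : L ⊗[(LaurentSeries F)] TruncAlg (LaurentSeries F) p n := f • ∑ ℓ ∈ Finset.Icc 1 (p - 1),
      pfCoeff (LaurentSeries F) p ℓ • ((x ^ (p ^ r * ℓ)) ⊗ₜ[(LaurentSeries F)] (tgen (LaurentSeries F) p n ^ (p ^ r * (p - ℓ)))) with hC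
  have hAPC : A = P + C := by rw [hA, hP, hC]; rfl
  -- multiplication by C
  have goodC : ∀ (z : L ⊗[(LaurentSeries F)] TruncAlg (LaurentSeries F) p n) (d c : ℤ), GoodCf (LaurentSeries F) p n L vL b d c z →
      GoodCf (LaurentSeries F) p n L vL b (d + 1) (c + T) (C * z) := by
    intro z d c hz
    rw [hC, smul_mul_assoc, Finset.sum_mul]
    simp only [smul_mul_assoc]
    have h2 : ∀ ℓ ∈ Finset.Icc 1 (p - 1),
        GoodCf (LaurentSeries F) p n L vL b (d + (p : ℤ) ^ (r + 1)) c
          (pfCoeff (LaurentSeries F) p ℓ • (((x ^ (p ^ r * ℓ)) ⊗ₜ[(LaurentSeries F)] (tgen (LaurentSeries F) p n ^ (p ^ r * (p - ℓ)))) * z)) := by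
      intro ℓ hℓ
      have hℓ' := hℓ
      rw [Finset.mem_Icc] at hℓ'
      have hcastsum : ((p ^ r * ℓ : ℕ) : ℤ) + ((p ^ r * (p - ℓ) : ℕ) : ℤ) = (p : ℤ) ^ (r + 1) := by
        have h1 : (p ^ r * ℓ : ℕ) + (p ^ r * (p - ℓ)) = p ^ (r + 1) := by
          rw [← Nat.mul_add, show ℓ + (p - ℓ) = p by omega, pow_succ]
        have := congrArg (fun t : ℕ => (t : ℤ)) h1
        push_cast at this ⊢
        linarith
      have hg1 := good_mul_pow vL hvmul hx0 hvxpow (p ^ r * ℓ) (p ^ r * (p - ℓ)) hz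
      have hg2 : GoodCf (LaurentSeries F) p n L vL b (d + (p : ℤ) ^ (r + 1)) c
          (((x ^ (p ^ r * ℓ)) ⊗ₜ[(LaurentSeries F)] (tgen (LaurentSeries F) p n ^ (p ^ r * (p - ℓ)))) * z) :=
        good_mono vL (le_of_eq (by rw [← hcastsum]; ring)) hg1
      have hg3 := good_smul vL hvmul (pfCoeff (LaurentSeries F) p ℓ) (hpf ℓ hℓ).1 hg2
      rw [(hpf ℓ hℓ).2, add_zero] at hg3
      exact hg3
    have hsum := good_sum vL hvadd _ _ h2
    have hg4 := good_smul vL hvmul f hf hsum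
    rw [hvK f hf] at hg4
    exact good_mono vL (le_of_eq (by rw [hT]; ring)) hg4
  -- good P powers
  have goodP : ∀ m : ℕ, GoodCf (LaurentSeries F) p n L vL b m 0 (P ^ m) := by
    intro m
    induction m with
    | zero =>
        rw [pow_zero]
        intro j hjn h0
        rw [Algebra.TensorProduct.one_def, coeffL_tmul,
          show (1 : TruncAlg (LaurentSeries F) p n) = tgen (LaurentSeries F) p n ^ 0 from (pow_zero _).symm,
          zdual_tgen_pow j 0 hjn] at h0 ⊢
        by_cases hj0 : j = 0
        · subst hj0
          rw [if_pos rfl, hsmul1 1] at h0 ⊢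
          simp [hv1]
        · rw [if_neg hj0, hsmul0 1] at h0; exact absurd rfl h0
    | succ m ih =>
        have hstep : P ^ (m + 1)
            = ((x ^ 1) ⊗ₜ[(LaurentSeries F)] (tgen (LaurentSeries F) p n ^ 0)) * P ^ m
              + ((x ^ 0) ⊗ₜ[(LaurentSeries F)] (tgen (LaurentSeries F) p n ^ 1)) * P ^ m := by
          rw [pow_succ', hP, pow_one, pow_zero, pow_one, pow_zero, add_mul]
        rw [hstep]
        have g1 : GoodCf (LaurentSeries F) p n L vL b ((m : ℤ) + 1) 0
            (((x ^ 1) ⊗ₜ[(LaurentSeries F)] (tgen (LaurentSeries F) p n ^ 0)) * P ^ m) :=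
          good_mono vL (le_of_eq (by push_cast; ring))
            (good_mul_pow vL hvmul hx0 hvxpow 1 0 ih)
        have g2 : GoodCf (LaurentSeries F) p n L vL b ((m : ℤ) + 1) 0
            (((x ^ 0) ⊗ₜ[(LaurentSeries F)] (tgen (LaurentSeries F) p n ^ 1)) * P ^ m) :=
          good_mono vL (le_of_eq (by push_cast; ring))
            (good_mul_pow vL hvmul hx0 hvxpow 0 1 ih)
        exact good_mono vL (le_of_eq (by push_cast; ring)) (good_add vL hvadd g1 g2)
  -- good error terms
  have goodE : ∀ m : ℕ, GoodCf (LaurentSeries F) p n L vL b m T (A ^ m - P ^ m) := by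
    intro m
    induction m with
    | zero => rw [pow_zero, pow_zero, sub_self]; exact good_zero vL b 0 T
    | succ m ih =>
        have hid : A ^ (m + 1) - P ^ (m + 1)
            = (((x ^ 1) ⊗ₜ[(LaurentSeries F)] (tgen (LaurentSeries F) p n ^ 0)) * (A ^ m - P ^ m)
              + ((x ^ 0) ⊗ₜ[(LaurentSeries F)] (tgen (LaurentSeries F) p n ^ 1)) * (A ^ m - P ^ m))
              + (C * (A ^ m - P ^ m) + C * P ^ m) := by
          have h1 : ((x ^ 1) ⊗ₜ[(LaurentSeries F)] (tgen (LaurentSeries F) p n ^ 0)) + ((x ^ 0) ⊗ₜ[(LaurentSeries F)] (tgen (LaurentSeries F) p n ^ 1)) = P := by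
            rw [hP, pow_one, pow_zero, pow_one, pow_zero]
          rw [← h1] at hAPC
          rw [hAPC]
          simp only [hP, pow_one, pow_zero]
          ring
        rw [hid]
        have g1 : GoodCf (LaurentSeries F) p n L vL b ((m : ℤ) + 1) T
            (((x ^ 1) ⊗ₜ[(LaurentSeries F)] (tgen (LaurentSeries F) p n ^ 0)) * (A ^ m - P ^ m)) :=
          good_mono vL (le_of_eq (by push_cast; ring))
            (good_mul_pow vL hvmul hx0 hvxpow 1 0 ih)
        have g2 : GoodCf (LaurentSeries F) p n L vL b ((m : ℤ) + 1) T
            (((x ^ 0) ⊗ₜ[(LaurentSeries F)] (tgen (LaurentSeries F) p n ^ 1)) * (A ^ m - P ^ m)) :=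
          good_mono vL (le_of_eq (by push_cast; ring))
            (good_mul_pow vL hvmul hx0 hvxpow 0 1 ih)
        have g3 : GoodCf (LaurentSeries F) p n L vL b ((m : ℤ) + 1) T (C * (A ^ m - P ^ m)) :=
          good_mono vL (by linarith) (goodC _ _ _ ih)
        have g4 : GoodCf (LaurentSeries F) p n L vL b ((m : ℤ) + 1) T (C * P ^ m) :=
          good_mono vL (le_of_eq (by ring)) (goodC _ _ _ (goodP m))
        exact good_mono vL (le_of_eq (by push_cast; ring))
          (good_add vL hvadd (good_add vL hvadd g1 g2) (good_add vL hvadd g3 g4))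
  -- exact coefficient of P ^ i
  have hPcoeff : coeffL (LaurentSeries F) p n L (p ^ s) (P ^ i)
      = if p ^ s ≤ i then (Nat.choose i (p ^ s)) • x ^ (i - p ^ s) else 0 := by
    rw [hP, add_pow, map_sum]
    have hterm : ∀ k ∈ Finset.range (i + 1),
        coeffL (LaurentSeries F) p n L (p ^ s)
          ((x ⊗ₜ[(LaurentSeries F)] (1 : TruncAlg (LaurentSeries F) p n)) ^ k * ((1 : L) ⊗ₜ[(LaurentSeries F)] tgen (LaurentSeries F) p n) ^ (i - k)
            * (Nat.choose i k : L ⊗[(LaurentSeries F)] TruncAlg (LaurentSeries F) p n))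
        = Nat.choose i k • ((if p ^ s = i - k then (1 : (LaurentSeries F)) else 0) • x ^ k) := by
      intro k hk
      rw [Algebra.TensorProduct.tmul_pow, Algebra.TensorProduct.tmul_pow,
        Algebra.TensorProduct.tmul_mul_tmul, one_pow, one_pow, mul_one, one_mul]
      rw [mul_comm, ← nsmul_eq_mul, map_nsmul, coeffL_tmul, zdual_tgen_pow _ _ hj]
    rw [Finset.sum_congr rfl hterm]
    rcases le_or_gt (p ^ s) i with hle | hlt
    · rw [if_pos hle, Finset.sum_eq_single (i - p ^ s)]
      · rw [if_pos (by omega : p ^ s = i - (i - p ^ s)), hsmul1 _, Nat.choose_symm hle]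
      · intro k hk hne
        rw [Finset.mem_range] at hk
        rw [if_neg (by omega), hsmul0 _, smul_zero]
      · intro h; exact absurd (Finset.mem_range.mpr (by omega)) h
    · rw [if_neg (by omega)]
      apply Finset.sum_eq_zero
      intro k hk
      rw [Finset.mem_range] at hk
      rw [if_neg (by omega), hsmul0 _, smul_zero]
  -- identify the Hopf action with a coefficient of A ^ i
  have hact_eq : hact (LaurentSeries F) p n r f L x bL (zdual (LaurentSeries F) p n (p ^ s)) (x ^ i)
      = coeffL (LaurentSeries F) p n L (p ^ s) (alphaMap (LaurentSeries F) p n r f L x bL (x ^ i)) := rfl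
  have halpha : alphaMap (LaurentSeries F) p n r f L x bL (x ^ i) = A ^ i := by
    have h1 : (x : L) ^ i = bL ⟨i, hilt⟩ := (hbL ⟨i, hilt⟩).symm
    rw [h1, alphaMap, Module.Basis.constr_basis]
  set m : ℤ := (i : ℤ) - (p : ℤ) ^ s with hmdef
  set c0 : L := coeffL (LaurentSeries F) p n L (p ^ s) (A ^ i - P ^ i) with hc0
  refine ⟨x ^ (-m) * c0, ?_, ?_⟩
  · -- membership in the fractional ideal
    simp only [fracIdeal, Set.mem_setOf_eq]
    intro hw
    have hcne : c0 ≠ 0 := by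
      intro h; apply hw; rw [h, mul_zero]
    have hxm : x ^ (-m) ≠ 0 := zpow_ne_zero _ hx0
    rw [hvmul _ _ hxm hcne, hvzpow]
    have hgE := goodE i (p ^ s) hj hcne
    have hps : ((p ^ s : ℕ) : ℤ) = (p : ℤ) ^ s := by push_cast; ring
    rw [hps] at hgE
    rw [← hc0] at hgE
    rw [hmdef]
    linarith
  · -- the congruence identity
    have hmain : (digit p i s : (LaurentSeries F)) • (x ^ m) = coeffL (LaurentSeries F) p n L (p ^ s) (P ^ i) := by
      rw [hPcoeff]
      rcases le_or_gt (p ^ s) i with hle | hlt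
      · rw [if_pos hle]
        have hcast : (i : ℤ) - (p : ℤ) ^ s = ((i - p ^ s : ℕ) : ℤ) := by
          push_cast [hle]; ring
        rw [show x ^ m = x ^ ((i - p ^ s : ℕ)) from by rw [hmdef, hcast, zpow_natCast]]
        rw [← Nat.cast_smul_eq_nsmul (LaurentSeries F) (Nat.choose i (p ^ s)) (x ^ (i - p ^ s))]
        congr 1
        rw [digit]
        exact ((CharP.natCast_eq_natCast (LaurentSeries F) p).mpr (lucas_digit p s i)).symm
      · rw [if_neg (not_le.mpr hlt)]
        rw [show digit p i s = 0 from by rw [digit, Nat.div_eq_of_lt hlt, Nat.zero_mod],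
          Nat.cast_zero, hsmul0 _]
    rw [hact_eq, halpha]
    calc coeffL (LaurentSeries F) p n L (p ^ s) (A ^ i) - (digit p i s : (LaurentSeries F)) • (x ^ m)
        = coeffL (LaurentSeries F) p n L (p ^ s) (A ^ i) - coeffL (LaurentSeries F) p n L (p ^ s) (P ^ i) := by rw [hmain]
      _ = c0 := by rw [hc0, map_sub]
      _ = x ^ m * (x ^ (-m) * c0) := by
          rw [← mul_assoc, ← zpow_add₀ hx0, add_neg_cancel, zpow_zero, one_mul]


end
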